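/- arXiv:2407.04471 — 6 statements merged into one kernel-verified Lean document; each statement's English description precedes it below -/
import Mathlib

section
/- Truthful bidding is a dominant strategy in the sponsored QA auction: for every advertiser i, every profile of the other advertisers' bids (b_j)_{j ≠ i}, and every alternative bid β ≥ 0, U_i(β) ≤ U_i(v_i), where U_i(β) = v_i − (M_i − u_i) if u_i + β > M_i and U_i(β) = 0 otherwise, with M_i = max_{j ≠ i} (u_j + b_j). -/
/-- Truthful bidding is a dominant strategy in the sponsored QA auction. -/
theorem sponsored_qa_truthful_dominant {n : ℕ} (hn : 2 ≤ n) (u v b : Fin n → ℝ)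
    (hu : ∀ j, 0 ≤ u j) (hv : ∀ j, 0 ≤ v j) (hb : ∀ j, 0 ≤ b j)
    (i : Fin n) (M : ℝ)
    (hM : IsGreatest ((fun j => u j + b j) '' {j | j ≠ i}) M)
    (β : ℝ) (hβ : 0 ≤ β) :
    (if u i + β > M then v i - (M - u i) else 0) ≤
      (if u i + v i > M then v i - (M - u i) else 0) := by
  split_ifs with h1 h2 <;> linarith
end

section
/- The winner of the sponsored QA auction is not necessarily the advertiser with the highest value (hence, under truthful bidding, not necessarily the highest bidder): with sponsored-answer models p_1^s = ε·p_o + (1−ε)·p_1 and p_2^s = (1−ε)·p_o + ε·p_2, advertiser values v_i = S(p_i^s, p_i) and user utilities u_i = S(p_i^s, p_o), there exists ε_0 > 0 such that for all ε ∈ (0, ε_0), both v_1 > v_2 and v_2 + u_2 > v_1 + u_1 hold; i.e., advertiser 2 wins the auction although advertiser 1 has the higher value. -/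
/-- Cross entropy between two distributions over a two-token vocabulary. -/
noncomputable def CE (p q : ℝ × ℝ) : ℝ := -(p.1 * Real.log q.1 + p.2 * Real.log q.2)

/-- Similarity based on symmetric cross entropy, with constant `A`. -/
noncomputable def Sim (A : ℝ) (p q : ℝ × ℝ) : ℝ := 2 * A - CE p q - CE q p

/-- Linear fusion of two unigram language models with weight `l`. -/
noncomputable def mix (l : ℝ) (p q : ℝ × ℝ) : ℝ × ℝ :=
  (l * p.1 + (1 - l) * q.1, l * p.2 + (1 - l) * q.2)

open Real Filter Set

/-- coefficient of `log ε` in D₁ -/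
noncomputable def c1 (ε : ℝ) : ℝ := 2*ε*(1-ε)+ε-1/2

/-- continuous remainder of D₁ -/
noncomputable def G1 (ε : ℝ) : ℝ :=
  (ε^2+(1-ε)^2) * Real.log (1-ε) + ε * Real.log (2*(1-ε)) + (1-ε) * Real.log (ε^2+(1-ε)^2)
  + Real.log 2 - (1/2) * Real.log (1-(3/2)*ε+ε^2) - (1/2) * Real.log (3/2-ε)

/-- coefficient of `log ε` in D₂ -/
noncomputable def c2 (ε : ℝ) : ℝ :=
  (3/2)*ε-ε^2+1/2+ε-2*ε*(1-ε)-ε-(ε^2+(1-ε)^2)-(1-ε)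

/-- continuous remainder of D₂ -/
noncomputable def G2 (ε : ℝ) : ℝ :=
  -Real.log 2 + (1/2)*(Real.log (1-(3/2)*ε+ε^2) + Real.log (3/2-ε))
  + (1-(3/2)*ε+ε^2)*Real.log (1-ε) + (1-ε)*Real.log (1-(3/2)*ε+ε^2) + ε*Real.log (3/2-ε)
  - ((ε^2+(1-ε)^2)*Real.log (1-ε) + ε*Real.log (2*(1-ε)) + (1-ε)*Real.log (ε^2+(1-ε)^2))
  - (2*ε*(1-ε)*Real.log (1-ε) + (1-ε)*Real.log (2*(1-ε)) + ε*Real.log (ε^2+(1-ε)^2))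

lemma decomp1 (A ε : ℝ) (h0 : 0 < ε) (h1 : ε < 1/2) :
    Sim A (mix ε (1 - ε, ε) (ε, 1 - ε)) (ε, 1 - ε) -
      Sim A (mix (1 - ε) (1 - ε, ε) ((1 : ℝ)/2, (1 : ℝ)/2)) ((1 : ℝ)/2, (1 : ℝ)/2)
    = c1 ε * Real.log ε + G1 ε := by
  have hne1 : (2*(1-ε)) ≠ 0 := by nlinarith
  have hne2 : ((3:ℝ)/2-ε) ≠ 0 := by nlinarith
  simp only [Sim, CE, mix]
  rw [show ε*(1-ε)+(1-ε)*ε = ε*(2*(1-ε)) by ring,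
      show ε*ε+(1-ε)*(1-ε) = ε^2+(1-ε)^2 by ring,
      show (1-ε)*(1-ε)+(1-(1-ε))*((1:ℝ)/2) = 1-(3/2)*ε+ε^2 by ring,
      show (1-ε)*ε+(1-(1-ε))*((1:ℝ)/2) = ε*(3/2-ε) by ring,
      Real.log_mul h0.ne' hne1, Real.log_mul h0.ne' hne2,
      show (1:ℝ)/2 = 2⁻¹ by norm_num, Real.log_inv]
  unfold c1 G1; ring

lemma decomp2 (A ε : ℝ) (h0 : 0 < ε) (h1 : ε < 1/2) :
    (Sim A (mix (1 - ε) (1 - ε, ε) ((1 : ℝ)/2, (1 : ℝ)/2)) ((1 : ℝ)/2, (1 : ℝ)/2) +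
       Sim A (mix (1 - ε) (1 - ε, ε) ((1 : ℝ)/2, (1 : ℝ)/2)) (1 - ε, ε)) -
    (Sim A (mix ε (1 - ε, ε) (ε, 1 - ε)) (ε, 1 - ε) +
       Sim A (mix ε (1 - ε, ε) (ε, 1 - ε)) (1 - ε, ε))
    = c2 ε * Real.log ε + G2 ε := by
  have hne1 : (2*(1-ε)) ≠ 0 := by nlinarith
  have hne2 : ((3:ℝ)/2-ε) ≠ 0 := by nlinarith
  simp only [Sim, CE, mix]
  rw [show ε*(1-ε)+(1-ε)*ε = ε*(2*(1-ε)) by ring,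
      show ε*ε+(1-ε)*(1-ε) = ε^2+(1-ε)^2 by ring,
      show (1-ε)*(1-ε)+(1-(1-ε))*((1:ℝ)/2) = 1-(3/2)*ε+ε^2 by ring,
      show (1-ε)*ε+(1-(1-ε))*((1:ℝ)/2) = ε*(3/2-ε) by ring,
      Real.log_mul h0.ne' hne1, Real.log_mul h0.ne' hne2,
      show (1:ℝ)/2 = 2⁻¹ by norm_num, Real.log_inv]
  unfold c2 G2; ring

lemma contG1 : ContinuousAt G1 0 := by
  unfold G1
  have h := Real.continuousAt_log (x := (1:ℝ)) (by norm_num)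
  fun_prop (disch := norm_num)

lemma contG2 : ContinuousAt G2 0 := by
  unfold G2
  fun_prop (disch := norm_num)

lemma tendsto_aux (c G : ℝ → ℝ) (L M : ℝ) (hL : L < 0)
    (hc : Filter.Tendsto c (nhdsWithin 0 (Set.Ioi 0)) (nhds L))
    (hG : Filter.Tendsto G (nhdsWithin 0 (Set.Ioi 0)) (nhds M)) :
    Filter.Tendsto (fun ε => c ε * Real.log ε + G ε) (nhdsWithin 0 (Set.Ioi 0)) Filter.atTop := by
  have hlog : Filter.Tendsto Real.log (nhdsWithin 0 (Set.Ioi 0)) Filter.atBot :=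
    Real.tendsto_log_nhdsGT_zero
  exact (hc.neg_mul_atBot hL hlog).atTop_add hG

/-- The winner of the auction is not necessarily the advertiser with the
highest value (hence not necessarily the highest bidder under truthful
bidding): with λ₁ = ε and λ₂ = 1-ε, for all small enough ε > 0, advertiser 1
has the higher value but advertiser 2 has the higher platform value. -/
theorem winner_not_highest_value (A : ℝ) :
    ∃ ε₀ : ℝ, 0 < ε₀ ∧ ∀ ε : ℝ, 0 < ε → ε < ε₀ →
      (Sim A (mix ε (1 - ε, ε) (ε, 1 - ε)) (ε, 1 - ε) >
        Sim A (mix (1 - ε) (1 - ε, ε) ((1 : ℝ)/2, (1 : ℝ)/2)) ((1 : ℝ)/2, (1 : ℝ)/2)) ∧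
      (Sim A (mix (1 - ε) (1 - ε, ε) ((1 : ℝ)/2, (1 : ℝ)/2)) ((1 : ℝ)/2, (1 : ℝ)/2) +
         Sim A (mix (1 - ε) (1 - ε, ε) ((1 : ℝ)/2, (1 : ℝ)/2)) (1 - ε, ε) >
       Sim A (mix ε (1 - ε, ε) (ε, 1 - ε)) (ε, 1 - ε) +
         Sim A (mix ε (1 - ε, ε) (ε, 1 - ε)) (1 - ε, ε)) := by
  have hc1 : Filter.Tendsto c1 (nhdsWithin 0 (Set.Ioi 0)) (nhds (-(1/2))) := by
    have : ContinuousAt c1 0 := by unfold c1; fun_prop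
    have h : Filter.Tendsto c1 (nhdsWithin 0 (Set.Ioi 0)) (nhds (c1 0)) :=
      this.tendsto.mono_left nhdsWithin_le_nhds
    simpa [c1, show c1 0 = -(1/2) by unfold c1; norm_num] using h
  have hc2 : Filter.Tendsto c2 (nhdsWithin 0 (Set.Ioi 0)) (nhds (-(3/2))) := by
    have : ContinuousAt c2 0 := by unfold c2; fun_prop
    have h : Filter.Tendsto c2 (nhdsWithin 0 (Set.Ioi 0)) (nhds (c2 0)) :=
      this.tendsto.mono_left nhdsWithin_le_nhds
    simpa [show c2 0 = -(3/2) by unfold c2; norm_num] using h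
  have hG1 : Filter.Tendsto G1 (nhdsWithin 0 (Set.Ioi 0)) (nhds (G1 0)) :=
    contG1.tendsto.mono_left nhdsWithin_le_nhds
  have hG2 : Filter.Tendsto G2 (nhdsWithin 0 (Set.Ioi 0)) (nhds (G2 0)) :=
    contG2.tendsto.mono_left nhdsWithin_le_nhds
  have hT1 := tendsto_aux c1 G1 _ _ (by norm_num) hc1 hG1
  have hT2 := tendsto_aux c2 G2 _ _ (by norm_num) hc2 hG2
  have hmem : Set.Ioo (0:ℝ) (1/2) ∈ nhdsWithin (0:ℝ) (Set.Ioi 0) :=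
    Ioo_mem_nhdsGT_of_mem (by norm_num)
  have hP1 : ∀ᶠ ε in nhdsWithin (0:ℝ) (Set.Ioi 0), (0:ℝ) < c1 ε * Real.log ε + G1 ε :=
    hT1.eventually_gt_atTop 0
  have hP2 : ∀ᶠ ε in nhdsWithin (0:ℝ) (Set.Ioi 0), (0:ℝ) < c2 ε * Real.log ε + G2 ε :=
    hT2.eventually_gt_atTop 0
  have hall := hP1.and hP2
  rw [Filter.eventually_iff] at hall
  obtain ⟨u, hu, hsub⟩ := mem_nhdsGT_iff_exists_Ioo_subset.mp hall
  refine ⟨min u (1/2), lt_min hu (by norm_num), ?_⟩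
  intro ε h0 hε
  have hεu : ε < u := lt_of_lt_of_le hε (min_le_left _ _)
  have hε2 : ε < 1/2 := lt_of_lt_of_le hε (min_le_right _ _)
  obtain ⟨hA, hB⟩ := hsub ⟨h0, hεu⟩
  constructor
  · have := decomp1 A ε h0 hε2; linarith
  · have := decomp2 A ε h0 hε2; linarith
end

section
/- The winner of the sponsored QA auction does not necessarily maximize user utility: with sponsored-answer models q_1^s = (1−ε)·p_o + ε·p_1 and q_2^s = (1/2)·p_o + (1/2)·p_2, advertiser values v_i = S(q_i^s, p_i) and user utilities u_i = S(q_i^s, p_o), there exists ε_0 > 0 such that for all ε ∈ (0, ε_0), both u_1 > u_2 and v_2 + u_2 > v_1 + u_1 hold; i.e., advertiser 2 wins the auction although the user utility of advertiser 1's sponsored answer is higher. -/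
set_option maxHeartbeats 1000000


set_option maxHeartbeats 1000000 in
lemma aux_one_sub_inv_le_log {x : ℝ} (hx : 0 < x) : 1 - 1/x ≤ Real.log x := by
  have h := Real.log_le_sub_one_of_pos (show (0:ℝ) < 1/x by positivity)
  rw [Real.log_div one_ne_zero (ne_of_gt hx), Real.log_one] at h
  linarith

lemma aux_exp6 : Real.exp 6 < 1000 := by
  have h := Real.exp_one_lt_d9
  have h2 : Real.exp 6 = (Real.exp 1)^6 := by
    rw [← Real.exp_nat_mul]; norm_num
  have h3 : (Real.exp 1)^6 < 2.7182818286^6 :=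
    pow_lt_pow_left₀ h (le_of_lt (Real.exp_pos 1)) (by norm_num)
  have h4 : (2.7182818286:ℝ)^6 < 1000 := by norm_num
  linarith [h2 ▸ h3]

/-- The winner of the auction does not necessarily maximize user utility:
with λ₁ = 1-ε and λ₂ = 1/2, for all small enough ε > 0, advertiser 1's
sponsored answer has the higher user utility but advertiser 2 has the higher
platform value. -/
theorem winner_not_max_user_utility (A : ℝ) :
    ∃ ε₀ : ℝ, 0 < ε₀ ∧ ∀ ε : ℝ, 0 < ε → ε < ε₀ →
      (Sim A (mix (1 - ε) (1 - ε, ε) (ε, 1 - ε)) (1 - ε, ε) >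
        Sim A (mix ((1 : ℝ)/2) (1 - ε, ε) ((1 : ℝ)/2, (1 : ℝ)/2)) (1 - ε, ε)) ∧
      (Sim A (mix ((1 : ℝ)/2) (1 - ε, ε) ((1 : ℝ)/2, (1 : ℝ)/2)) ((1 : ℝ)/2, (1 : ℝ)/2) +
         Sim A (mix ((1 : ℝ)/2) (1 - ε, ε) ((1 : ℝ)/2, (1 : ℝ)/2)) (1 - ε, ε) >
       Sim A (mix (1 - ε) (1 - ε, ε) (ε, 1 - ε)) (ε, 1 - ε) +
         Sim A (mix (1 - ε) (1 - ε, ε) (ε, 1 - ε)) (1 - ε, ε)) := by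
  refine ⟨1/1000, by norm_num, fun ε h0 h1 => ?_⟩
  -- basic positivity facts
  have hε1 : ε < 1 := by linarith
  have hq11 : (0:ℝ) < 1 - ε*2 + ε^2*2 := by nlinarith
  have hq12 : (0:ℝ) < ε*2 - ε^2*2 := by nlinarith
  have hq21 : (0:ℝ) < 3/4 + ε*(-1/2) := by nlinarith
  have hq22 : (0:ℝ) < 1/4 + ε*(1/2) := by nlinarith
  have h1e : (0:ℝ) < 1 - ε := by linarith
  -- log of ε bound
  have hL : Real.log ε < -6 := by
    have he : ε < Real.exp (-6) := by
      rw [Real.exp_neg]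
      have h6 := aux_exp6
      have hp := Real.exp_pos 6
      calc ε < 1/1000 := h1
        _ < (Real.exp 6)⁻¹ := by
            rw [show (Real.exp 6)⁻¹ = 1/Real.exp 6 by ring, div_lt_div_iff₀ (by norm_num) hp]
            nlinarith
    calc Real.log ε < Real.log (Real.exp (-6)) := Real.log_lt_log h0 he
      _ = -6 := Real.log_exp _
  -- log(1-ε) bounds
  have hM0 : Real.log (1 - ε) ≤ 0 := Real.log_nonpos (by linarith) (by linarith)
  have hM1 : -(2*ε) ≤ Real.log (1 - ε) := by
    have h := aux_one_sub_inv_le_log h1e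
    have h2 : 1/(1-ε) ≤ 1 + 2*ε := by
      rw [div_le_iff₀ h1e]; nlinarith
    linarith
  -- log q11 bounds
  have hK1a : Real.log (1 - ε*2 + ε^2*2) ≤ 0 := Real.log_nonpos (by linarith) (by nlinarith)
  have hK1b : -(3*ε) ≤ Real.log (1 - ε*2 + ε^2*2) := by
    have h := aux_one_sub_inv_le_log hq11
    have h2 : 1/(1 - ε*2 + ε^2*2) ≤ 1 + 3*ε := by
      rw [div_le_iff₀ hq11]; nlinarith
    linarith
  -- log q12 expansion
  have hK12 : Real.log (ε*2 - ε^2*2) = Real.log 2 + Real.log ε + Real.log (1-ε) := by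
    rw [show ε*2 - ε^2*2 = 2*(ε*(1-ε)) by ring,
        Real.log_mul (by norm_num) (by positivity),
        Real.log_mul (ne_of_gt h0) (ne_of_gt h1e)]
    ring
  -- log q21 bounds
  have hK21a : Real.log (3/4 + ε*(-1/2)) ≤ 0 := Real.log_nonpos (by linarith) (by nlinarith)
  have hK21b : -(1/2 : ℝ) ≤ Real.log (3/4 + ε*(-1/2)) := by
    have h := aux_one_sub_inv_le_log hq21
    have h2 : 1/(3/4 + ε*(-1/2)) ≤ 3/2 := by
      rw [div_le_iff₀ hq21]; nlinarith
    linarith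
  -- log q22 bounds
  have hK22a : Real.log (1/4 + ε*(1/2)) ≤ 0 := Real.log_nonpos (by linarith) (by nlinarith)
  have hK22b : -(3 : ℝ) ≤ Real.log (1/4 + ε*(1/2)) := by
    have h := aux_one_sub_inv_le_log hq22
    have h2 : 1/(1/4 + ε*(1/2)) ≤ 4 := by
      rw [div_le_iff₀ hq22]; nlinarith
    linarith
  -- log 2 bounds
  have hT0 : (0:ℝ) ≤ Real.log 2 := Real.log_nonneg (by norm_num)
  have hT1 : Real.log 2 ≤ 1 := by linarith [Real.log_le_sub_one_of_pos (show (0:ℝ) < 2 by norm_num)]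
  constructor
  · simp only [Sim, CE, mix]
    ring_nf
    rw [hK12]
    nlinarith [mul_nonneg (by linarith : (0:ℝ) ≤ -6 - Real.log ε)
                 (by nlinarith : (0:ℝ) ≤ 1/4 - 5*ε/2 + 2*ε^2),
               mul_nonneg (by linarith : (0:ℝ) ≤ Real.log (1-ε) + 2*ε)
                 (by nlinarith : (0:ℝ) ≤ 1/4 - ε/2 + 2*ε^2),
               mul_nonneg (by linarith : (0:ℝ) ≤ Real.log (1 - ε*2 + ε^2*2) + 3*ε)
                 (by linarith : (0:ℝ) ≤ 1 - ε),
               mul_nonneg h0.le hT0,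
               mul_nonneg (by linarith : (0:ℝ) ≤ -Real.log (3/4 + ε*(-1/2)))
                 (by linarith : (0:ℝ) ≤ 1 - ε),
               mul_nonneg h0.le (by linarith : (0:ℝ) ≤ -Real.log (1/4 + ε*(1/2)))]
  · simp only [Sim, CE, mix]
    ring_nf
    rw [hK12, show Real.log (1/2) = -Real.log 2 by rw [one_div, Real.log_inv]]
    nlinarith [mul_nonneg (by linarith : (0:ℝ) ≤ -6 - Real.log ε)
                 (by linarith : (0:ℝ) ≤ 7/4 - ε/2),
               mul_nonneg (by linarith : (0:ℝ) ≤ Real.log (3/4 + ε*(-1/2)) + 1/2)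
                 (by linarith : (0:ℝ) ≤ 3/2 - ε),
               mul_nonneg (by linarith : (0:ℝ) ≤ Real.log (1/4 + ε*(1/2)) + 3)
                 (by linarith : (0:ℝ) ≤ 1/2 + ε),
               mul_nonneg (by linarith : (0:ℝ) ≤ -Real.log (1-ε))
                 (by linarith : (0:ℝ) ≤ 5/4 + ε/2),
               hK1a, hT1, mul_nonneg h0.le hT0]
end

section
/- With the fusion weight λ_2 = 1−ε, so that p_2^s = (1−ε)·p_o + ε·p_2 = ((1−ε)² + ε/2, ε(1−ε) + ε/2), the symmetric cross-entropy dissimilarity between the sponsored answer and the ad of advertiser 2 satisfies lim_{ε→0⁺} [CE(p_2^s‖p_2) + CE(p_2‖p_2^s) + (1/2)·log ε] = log 2 − (1/2)·log(3/2) (equivalently, the advertiser value S(p_2^s, p_2) equals 2A − log 2 + (1/2)·log(3ε/2 − ε²) up to a term vanishing as ε → 0⁺). -/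
/-- With λ₂ = 1-ε, the symmetric cross-entropy dissimilarity between advertiser 2's
sponsored answer and her ad satisfies
CE(p₂ˢ‖p₂) + CE(p₂‖p₂ˢ) + (1/2)·log ε → log 2 − (1/2)·log(3/2) as ε → 0⁺. -/
theorem ad2_value_asymptotics :
    Filter.Tendsto
      (fun ε : ℝ =>
        CE (mix (1 - ε) (1 - ε, ε) ((1 : ℝ)/2, (1 : ℝ)/2)) ((1 : ℝ)/2, (1 : ℝ)/2) +
          CE ((1 : ℝ)/2, (1 : ℝ)/2) (mix (1 - ε) (1 - ε, ε) ((1 : ℝ)/2, (1 : ℝ)/2)) +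
          (1/2) * Real.log ε)
      (nhdsWithin 0 (Set.Ioi 0))
      (nhds (Real.log 2 - (1/2) * Real.log (3/2))) := by
  have h : Filter.Tendsto (fun ε : ℝ =>
      Real.log 2 - (1/2) * Real.log ((1-ε)^2 + ε/2) - (1/2) * Real.log (3/2 - ε))
      (nhdsWithin 0 (Set.Ioi 0)) (nhds (Real.log 2 - (1/2) * Real.log (3/2))) := by
    have hc : ContinuousAt (fun ε : ℝ =>
        Real.log 2 - (1/2) * Real.log ((1-ε)^2 + ε/2) - (1/2) * Real.log (3/2 - ε)) 0 := by
      have h1 : ContinuousAt (fun ε : ℝ => (1-ε)^2 + ε/2) 0 := by fun_prop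
      have h2 : ContinuousAt (fun ε : ℝ => (3:ℝ)/2 - ε) 0 := by fun_prop
      have hl1 : ContinuousAt (fun ε : ℝ => Real.log ((1-ε)^2 + ε/2)) 0 :=
        (Real.continuousAt_log (by norm_num)).comp h1
      have hl2 : ContinuousAt (fun ε : ℝ => Real.log ((3:ℝ)/2 - ε)) 0 :=
        (Real.continuousAt_log (by norm_num)).comp h2
      exact (continuousAt_const.sub (continuousAt_const.mul hl1)).sub
        (continuousAt_const.mul hl2)
    simpa using hc.tendsto.mono_left nhdsWithin_le_nhds
  refine h.congr' ?_
  have hmem : Set.Ioo (0:ℝ) 1 ∈ nhdsWithin (0:ℝ) (Set.Ioi 0) :=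
    Ioo_mem_nhdsGT_of_mem (by norm_num : (0:ℝ) ∈ Set.Ico 0 1)
  filter_upwards [hmem] with ε hε
  obtain ⟨hε0, hε1⟩ := hε
  have hu : ((1:ℝ)-ε)^2 + ε/2 > 0 := by nlinarith
  have hv : (3:ℝ)/2 - ε > 0 := by linarith
  have hmix1 : (mix (1 - ε) (1 - ε, ε) ((1 : ℝ)/2, (1 : ℝ)/2)).1 = (1-ε)^2 + ε/2 := by
    simp [mix]; ring
  have hmix2 : (mix (1 - ε) (1 - ε, ε) ((1 : ℝ)/2, (1 : ℝ)/2)).2 = ε * (3/2 - ε) := by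
    simp [mix]; ring
  have hlogv : Real.log (ε * (3/2 - ε)) = Real.log ε + Real.log (3/2 - ε) :=
    Real.log_mul (ne_of_gt hε0) (ne_of_gt hv)
  have hhalf : Real.log ((1:ℝ)/2) = -Real.log 2 := by
    rw [Real.log_div one_ne_zero two_ne_zero, Real.log_one]; ring
  simp only [CE, hmix1, hmix2, hlogv, hhalf]
  ring
end

section
/- With the fusion weight λ_1 = 1−ε, so that q_1^s = (1−ε)·p_o + ε·p_1 = ((1−ε)² + ε², 2ε(1−ε)), the symmetric cross-entropy dissimilarity between the sponsored answer and the ad of advertiser 1 satisfies lim_{ε→0⁺} [CE(q_1^s‖p_1) + CE(p_1‖q_1^s) + 2·log ε + log 2] = 0 (equivalently, the advertiser value S(q_1^s, p_1) equals 2A + log ε + log(2ε) up to a term vanishing as ε → 0⁺). -/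
lemma xlogx_zero : Filter.Tendsto (fun x : ℝ => x * Real.log x)
    (nhdsWithin 0 (Set.Ioi 0)) (nhds 0) := by
  have := tendsto_log_mul_rpow_nhdsGT_zero (one_pos)
  refine this.congr' ?_
  filter_upwards [self_mem_nhdsWithin] with x hx
  rw [Real.rpow_one]; ring

/-- With λ₁ = 1-ε, the symmetric cross-entropy dissimilarity between advertiser 1's
sponsored answer and her ad satisfies
CE(q₁ˢ‖p₁) + CE(p₁‖q₁ˢ) + 2·log ε + log 2 → 0 as ε → 0⁺. -/
theorem ad1_value_asymptotics' :
    Filter.Tendsto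
      (fun ε : ℝ =>
        CE (mix (1 - ε) (1 - ε, ε) (ε, 1 - ε)) (ε, 1 - ε) +
          CE (ε, 1 - ε) (mix (1 - ε) (1 - ε, ε) (ε, 1 - ε)) +
          2 * Real.log ε + Real.log 2)
      (nhdsWithin 0 (Set.Ioi 0)) (nhds 0) := by
  have key : Filter.Tendsto
      (fun ε : ℝ => (ε * Real.log ε) * (3 - 2 * ε)
        - (2 * ε * (1 - ε) + (1 - ε)) * Real.log (1 - ε)
        - ε * Real.log ((1 - ε) * (1 - ε) + ε * ε)
        + ε * Real.log 2)
      (nhdsWithin 0 (Set.Ioi 0)) (nhds 0) := by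
    have h1 : Filter.Tendsto (fun ε : ℝ => (ε * Real.log ε) * (3 - 2 * ε))
        (nhdsWithin 0 (Set.Ioi 0)) (nhds 0) := by
      have hc : Filter.Tendsto (fun ε : ℝ => 3 - 2 * ε) (nhdsWithin 0 (Set.Ioi 0))
          (nhds (3 - 2 * 0)) :=
        ((continuous_const.sub (continuous_const.mul continuous_id)).tendsto 0).mono_left
          nhdsWithin_le_nhds
      simpa using xlogx_zero.mul hc
    have h2 : Filter.Tendsto
        (fun ε : ℝ => - ((2 * ε * (1 - ε) + (1 - ε)) * Real.log (1 - ε))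
          - ε * Real.log ((1 - ε) * (1 - ε) + ε * ε) + ε * Real.log 2)
        (nhdsWithin 0 (Set.Ioi 0)) (nhds 0) := by
      have hc : ContinuousAt
          (fun ε : ℝ => - ((2 * ε * (1 - ε) + (1 - ε)) * Real.log (1 - ε))
            - ε * Real.log ((1 - ε) * (1 - ε) + ε * ε) + ε * Real.log 2) 0 := by
        apply ContinuousAt.add
        apply ContinuousAt.sub
        · exact (ContinuousAt.mul (by fun_prop)
            ((Real.continuousAt_log (by norm_num)).comp (by fun_prop))).neg
        · exact ContinuousAt.mul (by fun_prop)
            ((Real.continuousAt_log (by norm_num)).comp (by fun_prop))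
        · fun_prop
      have := hc.tendsto.mono_left (nhdsWithin_le_nhds (s := Set.Ioi (0:ℝ)))
      simpa using this
    have := h1.add h2
    simpa using this.congr (by intro x; ring)
  refine key.congr' ?_
  filter_upwards [self_mem_nhdsWithin,
    Ioo_mem_nhdsGT_of_mem (by norm_num : (0:ℝ) ∈ Set.Ico 0 1)] with ε hε hε1
  have h0 : (0:ℝ) < ε := hε
  have h1 : ε < 1 := hε1.2
  have hq1 : (0:ℝ) < (1 - ε) * (1 - ε) + ε * ε := by nlinarith
  simp only [CE, mix]
  rw [show (1:ℝ) - (1 - ε) = ε from by ring]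
  have hlog2 : Real.log ((1 - ε) * ε + ε * (1 - ε)) = Real.log 2 + Real.log ε
      + Real.log (1 - ε) := by
    have : (1 - ε) * ε + ε * (1 - ε) = 2 * (ε * (1 - ε)) := by ring
    rw [this, Real.log_mul (by norm_num) (mul_pos h0 (by linarith)).ne',
      Real.log_mul h0.ne' (by linarith : (0:ℝ) < 1 - ε).ne']
    ring
  rw [hlog2]
  ring
end

section
/- With the fusion weight λ_2 = 1/2, so that q_2^s = (1/2)·p_o + (1/2)·p_2 = (3/4 − ε/2, 1/4 + ε/2), the symmetric cross-entropy dissimilarity between the sponsored answer of advertiser 2 and the organic answer satisfies lim_{ε→0⁺} [CE(q_2^s‖p_o) + CE(p_o‖q_2^s) + (1/4)·log ε] = −log(3/4) (equivalently, the user utility S(q_2^s, p_o) equals 2A + (1/4)·log ε + log(3/4) up to a term vanishing as ε → 0⁺). -/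
/-- With λ₂ = 1/2, the symmetric cross-entropy dissimilarity between advertiser 2's
sponsored answer and the organic answer satisfies
CE(q₂ˢ‖p_o) + CE(p_o‖q₂ˢ) + (1/4)·log ε → −log(3/4) as ε → 0⁺. -/
theorem ad2_user_utility_asymptotics' :
    Filter.Tendsto
      (fun ε : ℝ =>
        CE (mix ((1 : ℝ)/2) (1 - ε, ε) ((1 : ℝ)/2, (1 : ℝ)/2)) (1 - ε, ε) +
          CE (1 - ε, ε) (mix ((1 : ℝ)/2) (1 - ε, ε) ((1 : ℝ)/2, (1 : ℝ)/2)) +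
          (1/4) * Real.log ε)
      (nhdsWithin 0 (Set.Ioi 0)) (nhds (-Real.log (3/4))) := by
  have heq : ∀ ε : ℝ,
      CE (mix ((1 : ℝ)/2) (1 - ε, ε) ((1 : ℝ)/2, (1 : ℝ)/2)) (1 - ε, ε) +
        CE (1 - ε, ε) (mix ((1 : ℝ)/2) (1 - ε, ε) ((1 : ℝ)/2, (1 : ℝ)/2)) +
        (1/4) * Real.log ε =
      -((3/4 - ε/2) * Real.log (1 - ε)) - (ε/2) * Real.log ε
        - (1 - ε) * Real.log ((1:ℝ)/2 * (1 - ε) + (1 - (1:ℝ)/2) * ((1:ℝ)/2))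
        - ε * Real.log ((1:ℝ)/2 * ε + (1 - (1:ℝ)/2) * ((1:ℝ)/2)) := by
    intro ε
    simp only [CE, mix]
    have h1 : (1:ℝ)/2 * (1 - ε) + (1 - (1:ℝ)/2) * ((1:ℝ)/2) = 3/4 - ε/2 := by ring
    ring
  simp only [heq]
  have hx : Filter.Tendsto (fun ε : ℝ => (ε/2) * Real.log ε)
      (nhdsWithin 0 (Set.Ioi 0)) (nhds 0) := by
    have h := tendsto_log_mul_rpow_nhdsGT_zero (r := 1) zero_lt_one
    simp only [Real.rpow_one] at h
    have := h.const_mul (1/2 : ℝ)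
    simpa [mul_comm, mul_assoc, mul_left_comm, div_eq_mul_inv] using this
  have hcont : Filter.Tendsto
      (fun ε : ℝ => -((3/4 - ε/2) * Real.log (1 - ε))
        - (1 - ε) * Real.log ((1:ℝ)/2 * (1 - ε) + (1 - (1:ℝ)/2) * ((1:ℝ)/2))
        - ε * Real.log ((1:ℝ)/2 * ε + (1 - (1:ℝ)/2) * ((1:ℝ)/2)))
      (nhdsWithin 0 (Set.Ioi 0)) (nhds (-Real.log (3/4))) := by
    have : ContinuousAt
        (fun ε : ℝ => -((3/4 - ε/2) * Real.log (1 - ε))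
          - (1 - ε) * Real.log ((1:ℝ)/2 * (1 - ε) + (1 - (1:ℝ)/2) * ((1:ℝ)/2))
          - ε * Real.log ((1:ℝ)/2 * ε + (1 - (1:ℝ)/2) * ((1:ℝ)/2))) 0 := by
      apply ContinuousAt.sub
      apply ContinuousAt.sub
      · exact (((continuousAt_const.sub (continuousAt_id.div_const 2)).mul
          ((Real.continuousAt_log (by norm_num)).comp
            (continuousAt_const.sub continuousAt_id))).neg)
      · exact (continuousAt_const.sub continuousAt_id).mul
          ((Real.continuousAt_log (by norm_num)).comp
            ((continuousAt_const.mul (continuousAt_const.sub continuousAt_id)).add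
              continuousAt_const))
      · exact continuousAt_id.mul
          ((Real.continuousAt_log (by norm_num)).comp
            ((continuousAt_const.mul continuousAt_id).add continuousAt_const))
    have h0 := this.continuousWithinAt (s := Set.Ioi 0)
    simpa [show ((2:ℝ)⁻¹ + (1 - (2:ℝ)⁻¹) * (2:ℝ)⁻¹) = 3/4 from by norm_num] using h0.tendsto
  have := hcont.sub hx
  simp only [sub_zero] at this ⊢
  convert this using 2 with ε
  ring
end
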